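/- Let V₁ and V₂ be finite-dimensional real inner product spaces, V₃ a real vector space, d₁ : V₁ → V₂ and d₂ : V₂ → V₃ linear maps with d₂ ∘ d₁ = 0, G : V₂ → V₁ a linear map, c a nonzero real number, and set L := c • (G ∘ d₁) : V₁ → V₁. Assume that L is symmetric (⟨L u, v⟩ = ⟨u, L v⟩), that ker L = ker d₁, and that for every w ∈ ker d₂ the element G w lies in the range of the adjoint d₁† : V₂ → V₁ of d₁. Then the linear map from {w ∈ ker d₂ : G w = 0} to ker d₂ ⧸ range d₁ sending w to its class is a linear isomorphism. -/
import Mathlib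


open RealInnerProductSpace

private lemma range_adjoint_eq_orth
    {V₁ V₂ : Type*}
    [NormedAddCommGroup V₁] [InnerProductSpace ℝ V₁] [FiniteDimensional ℝ V₁]
    [NormedAddCommGroup V₂] [InnerProductSpace ℝ V₂] [FiniteDimensional ℝ V₂]
    (f : V₁ →ₗ[ℝ] V₂) :
    LinearMap.range (LinearMap.adjoint f) = (LinearMap.ker f)ᗮ := by
  have hker : LinearMap.ker f = (LinearMap.range (LinearMap.adjoint f))ᗮ := by
    ext x
    simp only [LinearMap.mem_ker, Submodule.mem_orthogonal]
    constructor
    · rintro hx u ⟨y, rfl⟩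
      rw [LinearMap.adjoint_inner_left, hx, inner_zero_right]
    · intro h
      have : ∀ y : V₂, ⟪y, f x⟫ = 0 := fun y => by
        rw [← LinearMap.adjoint_inner_left]
        exact h _ ⟨y, rfl⟩
      exact inner_self_eq_zero.mp (this (f x))
  rw [hker, Submodule.orthogonal_orthogonal]

/-- Finite-dimensional algebraic content of Theorem 2.6 of Branson–Gover:
if `ker L = ker d₁` (encoding `H^{k-1}(M) = H^{k-1}_L(M)`) and `G w ∈ range d₁†`
for all closed `w`, then the space `{w ∈ ker d₂ : G w = 0}` of conformal
harmonics maps isomorphically onto `ker d₂ ⧸ range d₁`. -/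
theorem stmt_6
    {V₁ V₂ V₃ : Type*}
    [NormedAddCommGroup V₁] [InnerProductSpace ℝ V₁] [FiniteDimensional ℝ V₁]
    [NormedAddCommGroup V₂] [InnerProductSpace ℝ V₂] [FiniteDimensional ℝ V₂]
    [AddCommGroup V₃] [Module ℝ V₃]
    (d₁ : V₁ →ₗ[ℝ] V₂) (d₂ : V₂ →ₗ[ℝ] V₃) (h₂₁ : d₂ ∘ₗ d₁ = 0)
    (G : V₂ →ₗ[ℝ] V₁) (c : ℝ) (hc : c ≠ 0)
    (L : V₁ →ₗ[ℝ] V₁) (hL : L = c • (G ∘ₗ d₁))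
    (hsym : ∀ u v : V₁, ⟪L u, v⟫ = ⟪u, L v⟫)
    (hker : LinearMap.ker L = LinearMap.ker d₁)
    (hG : ∀ w ∈ LinearMap.ker d₂, G w ∈ LinearMap.range (LinearMap.adjoint d₁)) :
    Function.Bijective
      (((LinearMap.range d₁).comap (LinearMap.ker d₂).subtype).mkQ ∘ₗ
        Submodule.inclusion
          (inf_le_left :
            LinearMap.ker d₂ ⊓ LinearMap.ker G ≤ LinearMap.ker d₂)) := by
  -- L is self-adjoint
  have hLsa : L = LinearMap.adjoint L :=
    (LinearMap.eq_adjoint_iff L L).mpr hsym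
  -- range L = range (adjoint d₁)
  have hrange : LinearMap.range L = LinearMap.range (LinearMap.adjoint d₁) := by
    rw [hLsa, range_adjoint_eq_orth, hker, ← range_adjoint_eq_orth]
  constructor
  · -- injective
    rw [← LinearMap.ker_eq_bot]
    rw [Submodule.eq_bot_iff]
    rintro ⟨w, hw⟩ hw0
    simp only [LinearMap.mem_ker, LinearMap.comp_apply, Submodule.mkQ_apply,
      Submodule.Quotient.mk_eq_zero, Submodule.mem_comap] at hw0
    obtain ⟨u, hu⟩ := hw0
    have hGw : G w = 0 := hw.2
    have hd2w : w ∈ LinearMap.ker d₂ := hw.1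
    have hwu : d₁ u = w := by simpa using hu
    have hLu : L u = 0 := by
      rw [hL]; simp [hwu, hGw]
    have : u ∈ LinearMap.ker d₁ := hker ▸ hLu
    have hw0' : w = 0 := by rw [← hwu, this]
    ext; simp [hw0']
  · -- surjective
    intro q
    obtain ⟨⟨w, hw⟩, rfl⟩ := Submodule.mkQ_surjective _ q
    obtain ⟨v, hv⟩ := hG w hw
    -- c • adjoint d₁ v ∈ range L
    obtain ⟨u, hu⟩ : c • LinearMap.adjoint d₁ v ∈ LinearMap.range L := by
      rw [hrange]; exact Submodule.smul_mem _ _ ⟨v, rfl⟩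
    have hGd₁u : G (d₁ u) = G w := by
      have : c • G (d₁ u) = c • G w := by
        have := hu
        rw [hL] at this
        simp only [LinearMap.smul_apply, LinearMap.comp_apply] at this
        rw [this, hv]
      exact smul_right_injective _ hc this
    have hmem : w - d₁ u ∈ LinearMap.ker d₂ ⊓ LinearMap.ker G := by
      refine ⟨?_, ?_⟩
      · show d₂ (w - d₁ u) = 0
        have h0 : d₂ (d₁ u) = 0 := by
          have := congrFun (congrArg DFunLike.coe h₂₁) u
          simpa using this
        rw [map_sub, h0, LinearMap.mem_ker.mp hw, sub_zero]
      · show G (w - d₁ u) = 0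
        rw [map_sub, hGd₁u, sub_self]
    refine ⟨⟨w - d₁ u, hmem⟩, ?_⟩
    simp only [LinearMap.comp_apply, Submodule.mkQ_apply]
    rw [Submodule.Quotient.eq]
    refine Submodule.mem_comap.mpr ?_
    have : ((Submodule.inclusion inf_le_left ⟨w - d₁ u, hmem⟩ : LinearMap.ker d₂) - ⟨w, hw⟩ : LinearMap.ker d₂) = ⟨-(d₁ u), by simpa using (Submodule.sub_mem _ (Submodule.mem_inf.mp hmem).1 hw)⟩ := by
      ext; simp [Submodule.inclusion]
    rw [this]
    exact ⟨-u, by simp⟩
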